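/- Let θ = 2k-1 be odd with k ≥ 2, let α > 1 + 1/k, set a = ⌊α/(α-1)⌋ and β(α) = α·k² + a(a+1) - α·a(a-1) - (k+1)². Fix d ≥ 3 real parameter δ = d - 2.1 > 0 and suppose α = 1 + 2/θ + √(8δ)/θ^{3/2}. Then β(α) ≤ δ + 3/(2θ) + (√(8δ)/4)·(2θ^{-1/2} + 3θ^{-3/2}). -/

import Mathlib

theorem stmt_15 (k : ℕ) (hk : 2 ≤ k) (θ : ℝ) (hθ : θ = 2 * (k : ℝ) - 1)
    (δ : ℝ) (hδ : 0 < δ) (α : ℝ) (hα1 : 1 + 1 / (k : ℝ) < α)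
    (hα : α = 1 + 2 / θ + Real.sqrt (8 * δ) / θ ^ ((3 : ℝ) / 2))
    (a : ℤ) (ha : a = ⌊α / (α - 1)⌋) :
    α * (k : ℝ) ^ 2 + (a : ℝ) * (a + 1) - α * a * (a - 1) - ((k : ℝ) + 1) ^ 2
      ≤ δ + 3 / (2 * θ) +
        (Real.sqrt (8 * δ) / 4) * (2 * θ ^ (-(1 : ℝ) / 2) + 3 * θ ^ (-(3 : ℝ) / 2)) := by
  have hk2 : (2:ℝ) ≤ (k:ℝ) := by exact_mod_cast hk
  have hθ3 : (3:ℝ) ≤ θ := by rw [hθ]; linarith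
  have hθ0 : (0:ℝ) < θ := by linarith
  set u := Real.sqrt θ with hu_def
  have hu2 : u ^ 2 = θ := Real.sq_sqrt hθ0.le
  have hu0 : 0 < u := Real.sqrt_pos.mpr hθ0
  set s := Real.sqrt (8 * δ) with hs_def
  have hs2 : s ^ 2 = 8 * δ := Real.sq_sqrt (by linarith)
  have hs0 : 0 < s := Real.sqrt_pos.mpr (by linarith)
  have h32 : θ ^ ((3:ℝ)/2) = θ * u := by
    rw [show (3:ℝ)/2 = 1 + 1/2 by norm_num, Real.rpow_add hθ0, Real.rpow_one,
      ← Real.sqrt_eq_rpow]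
  have hm12 : θ ^ (-(1:ℝ)/2) = u⁻¹ := by
    rw [show -(1:ℝ)/2 = -(1/2) by norm_num, Real.rpow_neg hθ0.le, ← Real.sqrt_eq_rpow]
  have hm32 : θ ^ (-(3:ℝ)/2) = (θ * u)⁻¹ := by
    rw [show -(3:ℝ)/2 = -((3:ℝ)/2) by norm_num, Real.rpow_neg hθ0.le, h32]
  have hx0 : 0 < α - 1 := by
    have : 0 < 1 / (k:ℝ) := by positivity
    linarith
  -- step 1
  have h1 : (a : ℝ) * (a + 1) - α * a * (a - 1) ≤ 1/(α-1) + 1 + (α-1)/2 := by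
    have key : ((a : ℝ) * (a + 1) - α * a * (a - 1)) * (α - 1)
        ≤ 1 + (α-1) + (α-1)^2/2 := by
      nlinarith [sq_nonneg ((α-1)*(a:ℝ) - 1 - (α-1)/2)]
    have h1' : (a : ℝ) * (a + 1) - α * a * (a - 1)
        ≤ (1 + (α-1) + (α-1)^2/2) / (α-1) := (le_div_iff₀ hx0).mpr key
    have : (1 + (α-1) + (α-1)^2/2) / (α-1) = 1/(α-1) + 1 + (α-1)/2 := by
      field_simp
    linarith [this ▸ h1']
  -- step 2
  have hα1' : α - 1 = (2*u + s)/u^3 := by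
    rw [hα, h32, ← hu2]; field_simp; ring
  have h2 : 1/(α-1) ≤ u^2/2 - s*u/4 + δ := by
    rw [hα1', one_div_div]
    rw [div_le_iff₀ (by linarith)]
    nlinarith [hs2, hs0.le, hu0.le]
  -- final : exact identity
  have hk' : (k:ℝ) = (u^2+1)/2 := by rw [hu2, hθ]; ring
  have hαu : α = 1 + 2/u^2 + s/(u^2*u) := by rw [hα, h32, ← hu2]
  rw [hm12, hm32, ← hu2] at *
  have hfin : α * (k : ℝ) ^ 2 + (1/(α-1) + 1 + (α-1)/2) - ((k : ℝ) + 1) ^ 2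
      ≤ δ + 3 / (2 * (u^2)) + (s / 4) * (2 * u⁻¹ + 3 * (u^2 * u)⁻¹) := by
    have heq : α * (k : ℝ) ^ 2 + (u^2/2 - s*u/4 + δ + 1 + (α-1)/2) - ((k : ℝ) + 1) ^ 2
        = δ + 3 / (2 * (u^2)) + (s / 4) * (2 * u⁻¹ + 3 * (u^2 * u)⁻¹) := by
      rw [hk', hαu]; field_simp; ring
    linarith [h2]
  linarith [h1, hfin]
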